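/- Every solution (z_1, …, z_N) of the incremental problem (IP) satisfies, for each k = 1, …, N, the a priori energy-dissipation bound: I(t_k, z_k) + Σ_{j=1}^{k} D(z_{j-1}, z_j) ≤ I(0, z_0) + C_I · T. -/

import Mathlib

open Filter Topology Set MeasureTheory
open scoped ENNReal

noncomputable section

/-- Weak convergence of a sequence in a normed space: convergence against every
continuous linear functional. -/
def WeakConv {X : Type*} [NormedAddCommGroup X] [NormedSpace ℝ X]
    (u : ℕ → X) (z : X) : Prop :=
  ∀ f : X →L[ℝ] ℝ, Tendsto (fun n => f (u n)) atTop (𝓝 (f z))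

/-- A set is sequentially weakly compact if every sequence in it has a subsequence
converging weakly to a point of the set. -/
def SeqWeaklyCompact {X : Type*} [NormedAddCommGroup X] [NormedSpace ℝ X]
    (S : Set X) : Prop :=
  ∀ u : ℕ → X, (∀ n, u n ∈ S) →
    ∃ z ∈ S, ∃ φ : ℕ → ℕ, StrictMono φ ∧ WeakConv (fun n => u (φ n)) z

/-- The dissipation of the curve `z` on the interval `[s,t]`, defined as the supremum
over all finite partitions `s = τ₀ < τ₁ < … < τ_N = t` of `∑ⱼ D (z τⱼ₋₁) (z τⱼ)`. -/
def Diss {X : Type*} (D : X → X → ℝ≥0∞) (z : ℝ → X) (s t : ℝ) : ℝ≥0∞ :=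
  ⨆ (N : ℕ) (τ : ℕ → ℝ) (_ : τ 0 = s) (_ : τ N = t)
    (_ : ∀ j < N, τ j < τ (j + 1)),
    ∑ j ∈ Finset.range N, D (z (τ j)) (z (τ (j + 1)))

/-- Theorem 3.1(iii): every solution of (IP) satisfies the a priori energy-dissipation bound
`I(t_k,z_k) + ∑_(j=1)^k D(z_(j-1),z_j) ≤ I(0,z_0) + C_I·T`. -/
theorem incremental_energy_dissipation_bound
    {X : Type*} [NormedAddCommGroup X] [NormedSpace ℝ X] [CompleteSpace X]
    (T cD CI : ℝ) (hT : 0 < T) (hcD : 0 < cD) (hCI : 0 < CI)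
    -- `D` is a dissipation distance:
    (D : X → X → ℝ≥0∞)
    (hD0 : ∀ z : X, D z z = 0)
    (hDtri : ∀ z1 z2 z3 : X, D z1 z3 ≤ D z1 z2 + D z2 z3)
    (hDcoer : ∀ z0 z1 : X, ENNReal.ofReal (cD * ‖z1 - z0‖) ≤ D z0 z1)
    (hDlsc : ∀ (u v : ℕ → X) (z w : X), WeakConv u z → WeakConv v w →
      D z w ≤ liminf (fun j => D (u j) (v j)) atTop)
    -- `I` is an energy-storage functional with partial time derivative `DI`:
    (I : ℝ → X → ℝ≥0∞) (DI : ℝ → X → ℝ)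
    (hIlsc : ∀ s ∈ Icc (0:ℝ) T, ∀ (u : ℕ → X) (z : X), WeakConv u z →
      I s z ≤ liminf (fun j => I s (u j)) atTop)
    (hIsmooth : ∀ z : X, (∃ s ∈ Icc (0:ℝ) T, I s z ≠ ⊤) →
      ∀ s ∈ Icc (0:ℝ) T, I s z ≠ ⊤ ∧
        HasDerivWithinAt (fun τ => (I τ z).toReal) (DI s z) (Icc (0:ℝ) T) s ∧
        |DI s z| ≤ CI)
    -- a partition `0 = t 0 < t 1 < … < t N = T` and an initial datum `z0`:
    (N : ℕ) (hN : 1 ≤ N) (t : ℕ → ℝ) (ht0 : t 0 = 0) (htN : t N = T)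
    (htlt : ∀ j < N, t j < t (j + 1))
    (z0 : X) (hz0 : I 0 z0 ≠ ⊤)
    -- `z 1, …, z N` is a solution of the incremental problem (IP):
    (z : ℕ → X) (hzinit : z 0 = z0)
    (hmin : ∀ k < N, ∀ w : X,
      I (t (k + 1)) (z (k + 1)) + D (z k) (z (k + 1)) ≤ I (t (k + 1)) w + D (z k) w) :
    ∀ k : ℕ, 1 ≤ k → k ≤ N →
      I (t k) (z k) + ∑ j ∈ Finset.range k, D (z j) (z (j + 1))
        ≤ I 0 z0 + ENNReal.ofReal (CI * T) := by
  -- monotonicity of the partition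
  have hmono : ∀ j k : ℕ, j ≤ k → k ≤ N → t j ≤ t k := by
    intro j k hjk hkN
    induction k with
    | zero => have : j = 0 := Nat.le_zero.mp hjk; simp [this]
    | succ m ih =>
      rcases Nat.lt_or_ge j (m+1) with h | h
      · have h1 : t j ≤ t m := ih (by omega) (by omega)
        exact h1.trans (htlt m (by omega)).le
      · have : j = m + 1 := by omega
        subst this; rfl
  have htmem : ∀ k ≤ N, t k ∈ Icc (0:ℝ) T := by
    intro k hk
    constructor
    · have := hmono 0 k (Nat.zero_le _) hk; simpa [ht0] using this
    · have := hmono k N hk le_rfl; simpa [htN] using this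
  -- key analytic estimate
  have key : ∀ w : X, ∀ a b : ℝ, a ∈ Icc (0:ℝ) T → b ∈ Icc (0:ℝ) T → a ≤ b →
      I a w ≠ ⊤ → I b w ≤ I a w + ENNReal.ofReal (CI * (b - a)) := by
    intro w a b ha hb hab hfin
    have hsm := hIsmooth w ⟨a, ha, hfin⟩
    have hderiv : ∀ s ∈ Icc (0:ℝ) T,
        HasDerivWithinAt (fun τ => (I τ w).toReal) (DI s w) (Icc (0:ℝ) T) s :=
      fun s hs => (hsm s hs).2.1
    have hbound : ∀ s ∈ Icc (0:ℝ) T, ‖DI s w‖ ≤ CI := by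
      intro s hs; simpa [Real.norm_eq_abs] using (hsm s hs).2.2
    have hlip := (convex_Icc (0:ℝ) T).norm_image_sub_le_of_norm_hasDerivWithin_le
      hderiv hbound ha hb
    have h1 : (I b w).toReal ≤ (I a w).toReal + CI * (b - a) := by
      have hl : |(I b w).toReal - (I a w).toReal| ≤ CI * (b - a) := by
        have : ‖b - a‖ = b - a := by rw [Real.norm_eq_abs, abs_of_nonneg (by linarith)]
        simpa [Real.norm_eq_abs, this] using hlip
      linarith [abs_le.mp hl |>.2]
    have hbfin : I b w ≠ ⊤ := (hsm b hb).1
    calc I b w = ENNReal.ofReal ((I b w).toReal) := (ENNReal.ofReal_toReal hbfin).symm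
      _ ≤ ENNReal.ofReal ((I a w).toReal + CI * (b - a)) := ENNReal.ofReal_le_ofReal h1
      _ = ENNReal.ofReal ((I a w).toReal) + ENNReal.ofReal (CI * (b - a)) :=
          ENNReal.ofReal_add ENNReal.toReal_nonneg (mul_nonneg hCI.le (by linarith))
      _ = I a w + ENNReal.ofReal (CI * (b - a)) := by rw [ENNReal.ofReal_toReal hfin]
  -- main induction
  have main : ∀ k ≤ N,
      I (t k) (z k) + ∑ j ∈ Finset.range k, D (z j) (z (j + 1))
        ≤ I 0 z0 + ENNReal.ofReal (CI * t k) := by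
    intro k
    induction k with
    | zero => intro _; simp [ht0, hzinit]
    | succ m ih =>
      intro hm1
      have hmN : m < N := hm1
      have ihm := ih (le_of_lt hmN)
      have hfin : I (t m) (z m) ≠ ⊤ := by
        intro htop
        rw [htop] at ihm
        simp only [top_add] at ihm
        exact (ENNReal.add_lt_top.mpr
          ⟨hz0.lt_top, ENNReal.ofReal_lt_top⟩).not_ge ihm
      have hstep := hmin m hmN (z m)
      rw [hD0, add_zero] at hstep
      have hkey := key (z m) (t m) (t (m+1)) (htmem m hmN.le) (htmem (m+1) hm1)
        (htlt m hmN).le hfin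
      have h2 : I (t (m+1)) (z (m+1)) + D (z m) (z (m+1))
          ≤ I (t m) (z m) + ENNReal.ofReal (CI * (t (m+1) - t m)) :=
        hstep.trans hkey
      have htm0 : 0 ≤ t m := (htmem m hmN.le).1
      calc I (t (m+1)) (z (m+1)) + ∑ j ∈ Finset.range (m+1), D (z j) (z (j + 1))
          = (I (t (m+1)) (z (m+1)) + D (z m) (z (m+1)))
            + ∑ j ∈ Finset.range m, D (z j) (z (j + 1)) := by
            rw [Finset.sum_range_succ]; ring
        _ ≤ (I (t m) (z m) + ENNReal.ofReal (CI * (t (m+1) - t m)))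
            + ∑ j ∈ Finset.range m, D (z j) (z (j + 1)) := by
            exact add_le_add_left h2 _
        _ = (I (t m) (z m) + ∑ j ∈ Finset.range m, D (z j) (z (j + 1)))
            + ENNReal.ofReal (CI * (t (m+1) - t m)) := by ring
        _ ≤ (I 0 z0 + ENNReal.ofReal (CI * t m))
            + ENNReal.ofReal (CI * (t (m+1) - t m)) := add_le_add_left ihm _
        _ = I 0 z0 + (ENNReal.ofReal (CI * t m)
            + ENNReal.ofReal (CI * (t (m+1) - t m))) := by ring
        _ = I 0 z0 + ENNReal.ofReal (CI * t (m+1)) := by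
            rw [← ENNReal.ofReal_add (mul_nonneg hCI.le htm0)
              (mul_nonneg hCI.le (by linarith [(htlt m hmN).le]))]
            ring_nf
  intro k _ hkN
  refine (main k hkN).trans (add_le_add_right (ENNReal.ofReal_le_ofReal ?_) _)
  have : t k ≤ T := (htmem k hkN).2
  nlinarith
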